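/- Let U, V be Hopf algebras with bijective antipodes, in duality, with a bialgebra morphism γ : V → U^cop satisfying the projection condition, and let π(m ⊗ x) = mγ(x) be the resulting Hopf algebra projection from D = D(U^cop, V) onto U^cop. Let B = {a ∈ D : a₁ ⊗ π(a₂) = a ⊗ 1}. Then the map θ : V → B defined by θ(y) = S_U(γ(y₂)) ⊗ y₁ is a linear bijection. -/

import Mathlib

open TensorProduct Coalgebra

noncomputable section
set_option synthInstance.maxHeartbeats 1000000
set_option maxHeartbeats 1000000

/-- Convolution product of two `k`-valued functionals on a coalgebra. -/
def conv {k C : Type*} [CommRing k] [AddCommGroup C] [Module k C] [CoalgebraStruct k C]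
    (f g : C →ₗ[k] k) : C →ₗ[k] k :=
  LinearMap.mul' k k ∘ₗ TensorProduct.map f g ∘ₗ CoalgebraStruct.comul

variable {k U V : Type*} [CommRing k] [Ring U] [Ring V] [HopfAlgebra k U] [HopfAlgebra k V]

/-- The comultiplication of the coalgebra `U^cop ⊗ V` (the coalgebra of `D(U^cop, V)`). -/
def comulCop : U ⊗[k] V →ₗ[k] (U ⊗[k] V) ⊗[k] (U ⊗[k] V) :=
  (TensorProduct.tensorTensorTensorComm k U U V V).toLinearMap ∘ₗ
    TensorProduct.map ((TensorProduct.comm k U U).toLinearMap ∘ₗ Coalgebra.comul)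
      Coalgebra.comul

/-- The projection `π(m ⊗ x) = m γ(x)`. -/
def piMap (γ : V →ₗ[k] U) : U ⊗[k] V →ₗ[k] U :=
  LinearMap.mul' k U ∘ₗ γ.lTensor U

/-- The map `θ(y) = S_U(γ(y₂)) ⊗ y₁`. -/
def thetaMap (γ : V →ₗ[k] U) : V →ₗ[k] U ⊗[k] V :=
  TensorProduct.map (HopfAlgebra.antipode (R := k) ∘ₗ γ) LinearMap.id ∘ₗ
    (TensorProduct.comm k V V).toLinearMap ∘ₗ Coalgebra.comul

section CoalgHelpers
variable {A : Type*} [AddCommGroup A] [Module k A] [Coalgebra k A]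

lemma sum_counit_smul {ι : Type*} {a : A} (r : Repr k a ι) :
    ∑ i ∈ r.index, counit (R := k) (r.left i) • r.right i = a := by
  have h := congrArg (TensorProduct.lid k A) (sum_counit_tmul_eq r)
  rw [map_sum] at h
  simp only [lid_tmul, one_smul] at h
  exact h

lemma sum_smul_counit {ι : Type*} {a : A} (r : Repr k a ι) :
    ∑ i ∈ r.index, counit (R := k) (r.right i) • r.left i = a := by
  have h := congrArg (TensorProduct.rid k A) (sum_tmul_counit_eq r)
  rw [map_sum] at h
  simp only [rid_tmul, one_smul] at h
  exact h

/-- Four-fold coassociativity regrouping. -/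
lemma four_regroup {ι : Type*} {κ Λ : ι → Type*} {μ : (i : ι) → Λ i → Type*} {a : A} (r : Repr k a ι)
    (li : ∀ i : ι, Repr k (r.left i) (κ i)) (ri : ∀ i : ι, Repr k (r.right i) (Λ i))
    (rli : ∀ (i : ι) (q : Λ i), Repr k ((ri i).left q) (μ i q)) :
    ∑ i ∈ r.index, ∑ p ∈ (li i).index, ∑ q ∈ (ri i).index,
      (li i).left p ⊗ₜ[k] ((li i).right p ⊗ₜ[k] ((ri i).left q ⊗ₜ[k] (ri i).right q)) =
    ∑ i ∈ r.index, ∑ q ∈ (ri i).index, ∑ s ∈ (rli i q).index,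
      r.left i ⊗ₜ[k] ((rli i q).left s ⊗ₜ[k] ((rli i q).right s ⊗ₜ[k] (ri i).right q)) := by
  have E1 := sum_tmul_tmul_eq r li ri
  have h := congrArg (LinearMap.lTensor A (LinearMap.lTensor A (comul (R := k) (A := A)))) E1
  simp only [map_sum, LinearMap.lTensor_tmul] at h
  -- rewrite comul (r.right i) and comul ((ri i).right q)
  calc
    ∑ i ∈ r.index, ∑ p ∈ (li i).index, ∑ q ∈ (ri i).index,
      (li i).left p ⊗ₜ[k] ((li i).right p ⊗ₜ[k] ((ri i).left q ⊗ₜ[k] (ri i).right q))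
      = ∑ i ∈ r.index, ∑ p ∈ (li i).index,
          (li i).left p ⊗ₜ[k] ((li i).right p ⊗ₜ[k] comul (R := k) (r.right i)) := by
        refine Finset.sum_congr rfl fun i _ => Finset.sum_congr rfl fun p _ => ?_
        rw [← (ri i).eq, tmul_sum, tmul_sum]
    _ = ∑ i ∈ r.index, ∑ q ∈ (ri i).index,
          r.left i ⊗ₜ[k] ((ri i).left q ⊗ₜ[k] comul (R := k) ((ri i).right q)) := by
        rw [h]
    _ = ∑ i ∈ r.index, ∑ q ∈ (ri i).index, ∑ s ∈ (rli i q).index,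
          r.left i ⊗ₜ[k] ((rli i q).left s ⊗ₜ[k] ((rli i q).right s ⊗ₜ[k] (ri i).right q)) := by
        refine Finset.sum_congr rfl fun i _ => ?_
        have E2 := sum_tmul_tmul_eq (ri i) (rli i) (fun q => ℛ k ((ri i).right q))
        calc
          ∑ q ∈ (ri i).index, r.left i ⊗ₜ[k] ((ri i).left q ⊗ₜ[k] comul (R := k) ((ri i).right q))
            = r.left i ⊗ₜ[k] (∑ q ∈ (ri i).index, ∑ t ∈ (ℛ k ((ri i).right q)).index,
                (ri i).left q ⊗ₜ[k] ((ℛ k ((ri i).right q)).left t ⊗ₜ[k] (ℛ k ((ri i).right q)).right t)) := by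
              rw [tmul_sum]
              refine Finset.sum_congr rfl fun q _ => ?_
              rw [← (ℛ k ((ri i).right q)).eq, tmul_sum, tmul_sum]
          _ = r.left i ⊗ₜ[k] (∑ q ∈ (ri i).index, ∑ s ∈ (rli i q).index,
                (rli i q).left s ⊗ₜ[k] ((rli i q).right s ⊗ₜ[k] (ri i).right q)) := by rw [← E2]
          _ = _ := by rw [tmul_sum]; refine Finset.sum_congr rfl fun q _ => ?_; rw [tmul_sum]

end CoalgHelpers

section Conv
variable {A B : Type*} [Ring A] [HopfAlgebra k A] [Ring B] [Algebra k B]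

/-- Convolution product on `A →ₗ[k] B`. -/
def cmulB (f g : A →ₗ[k] B) : A →ₗ[k] B :=
  LinearMap.mul' k B ∘ₗ TensorProduct.map f g ∘ₗ comul

/-- The convolution unit. -/
def cunit : A →ₗ[k] B := Algebra.linearMap k B ∘ₗ counit

lemma cmulB_repr {ι : Type*} (f g : A →ₗ[k] B) {a : A} (r : Repr k a ι) :
    cmulB f g a = ∑ i ∈ r.index, f (r.left i) * g (r.right i) := by
  simp only [cmulB, LinearMap.comp_apply, ← r.eq, map_sum, TensorProduct.map_tmul,
    LinearMap.mul'_apply]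

lemma cmulB_apply (f g : A →ₗ[k] B) (a : A) :
    cmulB f g a = ∑ i ∈ (ℛ k a).index, f ((ℛ k a).left i) * g ((ℛ k a).right i) :=
  cmulB_repr f g (ℛ k a)

lemma cmulB_assoc (f g h : A →ₗ[k] B) : cmulB (cmulB f g) h = cmulB f (cmulB g h) := by
  ext a
  set r := ℛ k a
  have key := sum_map_tmul_tmul_eq (R := k) f g h a (repr := r)
    (a₁ := fun i => ℛ k (r.left i)) (a₂ := fun i => ℛ k (r.right i))
  have h2 := congrArg (LinearMap.mul' k B ∘ₗ LinearMap.lTensor B (LinearMap.mul' k B)) key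
  simp only [map_sum, LinearMap.comp_apply, LinearMap.lTensor_tmul, LinearMap.mul'_apply] at h2
  rw [cmulB_repr (cmulB f g) h r, cmulB_repr f (cmulB g h) r]
  calc
    ∑ i ∈ r.index, cmulB f g (r.left i) * h (r.right i)
      = ∑ i ∈ r.index, ∑ j ∈ (ℛ k (r.left i)).index,
          f ((ℛ k (r.left i)).left j) * (g ((ℛ k (r.left i)).right j) * h (r.right i)) := by
        refine Finset.sum_congr rfl fun i _ => ?_
        rw [cmulB_repr f g (ℛ k (r.left i)), Finset.sum_mul]
        exact Finset.sum_congr rfl fun j _ => mul_assoc _ _ _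
    _ = ∑ i ∈ r.index, ∑ j ∈ (ℛ k (r.right i)).index,
          f (r.left i) * (g ((ℛ k (r.right i)).left j) * h ((ℛ k (r.right i)).right j)) := h2.symm
    _ = ∑ i ∈ r.index, f (r.left i) * cmulB g h (r.right i) := by
        refine Finset.sum_congr rfl fun i _ => ?_
        rw [cmulB_repr g h (ℛ k (r.right i)), Finset.mul_sum]

lemma cmulB_one_left (f : A →ₗ[k] B) : cmulB cunit f = f := by
  ext a
  rw [cmulB_repr cunit f (ℛ k a)]
  calc
    ∑ i ∈ (ℛ k a).index, cunit ((ℛ k a).left i) * f ((ℛ k a).right i)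
      = ∑ i ∈ (ℛ k a).index, f (counit (R := k) ((ℛ k a).left i) • (ℛ k a).right i) := by
        refine Finset.sum_congr rfl fun i _ => ?_
        rw [map_smul, Algebra.smul_def]; rfl
    _ = f a := by rw [← map_sum, _root_.sum_counit_smul]

lemma cmulB_one_right (f : A →ₗ[k] B) : cmulB f cunit = f := by
  ext a
  rw [cmulB_repr f cunit (ℛ k a)]
  calc
    ∑ i ∈ (ℛ k a).index, f ((ℛ k a).left i) * cunit ((ℛ k a).right i)
      = ∑ i ∈ (ℛ k a).index, f (counit (R := k) ((ℛ k a).right i) • (ℛ k a).left i) := by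
        refine Finset.sum_congr rfl fun i _ => ?_
        rw [map_smul, Algebra.smul_def, Algebra.commutes]; rfl
    _ = f a := by rw [← map_sum, sum_smul_counit]

lemma conv_inv_unique {f g d : A →ₗ[k] B} (hf : cmulB f d = cunit) (hg : cmulB d g = cunit) :
    f = g := by
  have : cmulB f (cmulB d g) = cmulB (cmulB f d) g := (cmulB_assoc f d g).symm
  rw [hf, hg, cmulB_one_right, cmulB_one_left] at this
  exact this

end Conv

section Antipode
variable {A : Type*} [Ring A] [HopfAlgebra k A]

local notation "S" => HopfAlgebra.antipode (R := k) (A := A)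

lemma counit_antipode (a : A) : counit (R := k) (S a) = counit (R := k) a := by
  have h := congrArg (counit (R := k) (A := A)) (HopfAlgebra.sum_antipode_mul_eq_algebraMap_counit (ℛ k a))
  rw [map_sum, Bialgebra.counit_algebraMap] at h
  calc
    counit (R := k) (S a) = counit (R := k) (S (∑ i ∈ (ℛ k a).index,
        counit (R := k) ((ℛ k a).right i) • (ℛ k a).left i)) := by rw [sum_smul_counit]
    _ = ∑ i ∈ (ℛ k a).index, counit (R := k) (S ((ℛ k a).left i)) * counit (R := k) ((ℛ k a).right i) := by
        rw [map_sum, map_sum]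
        refine Finset.sum_congr rfl fun i _ => ?_
        rw [map_smul, map_smul, smul_eq_mul, mul_comm]
    _ = counit (R := k) a := by
        rw [← h]
        exact Finset.sum_congr rfl fun i _ => (Bialgebra.counit_mul _ _).symm
end Antipode

section Anticoalg
variable {A : Type*} [Ring A] [HopfAlgebra k A]

local notation "S" => HopfAlgebra.antipode (R := k) (A := A)

/-- slot map used twice below -/
def msmap : A ⊗[k] A →ₗ[k] A := LinearMap.mul' k A ∘ₗ LinearMap.lTensor A S

lemma msmap_tmul (x y : A) : msmap (x ⊗ₜ[k] y) = x * S y := rfl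

/-- regrouping `c ⊗ (w ⊗ (d₁ ⊗ d₂)) ↦ (c ⊗ d₂) ⊗ (w ⊗ d₁)`. -/
def regroup4 (M : Type*) [AddCommGroup M] [Module k M] :
    M ⊗[k] (M ⊗[k] (M ⊗[k] M)) →ₗ[k] (M ⊗[k] M) ⊗[k] (M ⊗[k] M) :=
  (TensorProduct.tensorTensorTensorComm k M M M M).toLinearMap ∘ₗ
    TensorProduct.map LinearMap.id (TensorProduct.comm k M M).toLinearMap ∘ₗ
      (TensorProduct.assoc k M M (M ⊗[k] M)).symm.toLinearMap

lemma regroup4_tmul (M : Type*) [AddCommGroup M] [Module k M] (c w d₁ d₂ : M) :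
    regroup4 M (c ⊗ₜ[k] (w ⊗ₜ[k] (d₁ ⊗ₜ[k] d₂))) = (c ⊗ₜ[k] d₂) ⊗ₜ[k] (w ⊗ₜ[k] d₁) := by
  simp [regroup4]

theorem comul_antipode :
    (comul (R := k) (A := A)) ∘ₗ S =
      (TensorProduct.map S S) ∘ₗ (TensorProduct.comm k A A).toLinearMap ∘ₗ comul := by
  refine conv_inv_unique (d := comul) ?_ ?_
  · -- easy side : cmulB (comul ∘ S) comul = cunit
    ext a
    rw [cmulB_repr _ _ (ℛ k a)]
    calc
      ∑ i ∈ (ℛ k a).index,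
          ((comul (R := k) (A := A)) ∘ₗ S) ((ℛ k a).left i) * comul ((ℛ k a).right i)
        = comul (R := k) (∑ i ∈ (ℛ k a).index, S ((ℛ k a).left i) * (ℛ k a).right i) := by
          rw [map_sum]
          exact Finset.sum_congr rfl fun i _ => (Bialgebra.comul_mul _ _).symm
      _ = cunit a := by
          rw [HopfAlgebra.sum_antipode_mul_eq_algebraMap_counit (ℛ k a)]
          simp only [cunit, LinearMap.comp_apply, Algebra.linearMap_apply]
          exact (Bialgebra.comulAlgHom k A).commutes _
  · -- hard side : cmulB comul ((S ⊗ S) ∘ comm ∘ comul) = cunit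
    ext a
    set r := ℛ k a with hr
    set li : ∀ i : A × A, Repr k (r.left i) (A × A) := fun i => ℛ k (r.left i) with hli
    set ri : ∀ i : A × A, Repr k (r.right i) (A × A) := fun i => ℛ k (r.right i) with hri
    set rli : ∀ (i : A × A) (q : A × A), Repr k ((ri i).left q) (A × A) :=
      fun i q => ℛ k ((ri i).left q) with hrli
    have four := four_regroup r li ri rli
    have key := congrArg (TensorProduct.map (msmap (k := k) (A := A)) msmap ∘ₗ regroup4 A) four
    simp only [map_sum, LinearMap.comp_apply, regroup4_tmul, TensorProduct.map_tmul,
      msmap_tmul] at key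
    -- LHS of the goal equals LHS of key
    rw [cmulB_repr _ _ r]
    calc
      ∑ i ∈ r.index, comul (R := k) (r.left i) *
          ((TensorProduct.map S S) ∘ₗ (TensorProduct.comm k A A).toLinearMap ∘ₗ comul)
            (r.right i)
        = ∑ i ∈ r.index, ∑ p ∈ (li i).index, ∑ q ∈ (ri i).index,
            ((li i).left p * S ((ri i).right q)) ⊗ₜ[k] ((li i).right p * S ((ri i).left q)) := by
          refine Finset.sum_congr rfl fun i _ => ?_
          rw [LinearMap.comp_apply, LinearMap.comp_apply, LinearEquiv.coe_coe,
            ← (ri i).eq, ← (li i).eq]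
          simp only [map_sum, TensorProduct.comm_tmul, TensorProduct.map_tmul]
          rw [Finset.sum_mul]
          refine Finset.sum_congr rfl fun p _ => ?_
          rw [Finset.mul_sum]
          refine Finset.sum_congr rfl fun q _ => ?_
          rw [Algebra.TensorProduct.tmul_mul_tmul]
      _ = ∑ i ∈ r.index, ∑ q ∈ (ri i).index, ∑ s ∈ (rli i q).index,
            (r.left i * S ((ri i).right q)) ⊗ₜ[k] ((rli i q).left s * S ((rli i q).right s)) :=
          key
      _ = cunit a := by
          have step1 : ∀ i ∈ r.index, ∑ q ∈ (ri i).index, ∑ s ∈ (rli i q).index,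
              (r.left i * S ((ri i).right q)) ⊗ₜ[k] ((rli i q).left s * S ((rli i q).right s)) =
              (r.left i * S (r.right i)) ⊗ₜ[k] (1 : A) := by
            intro i _
            calc
              ∑ q ∈ (ri i).index, ∑ s ∈ (rli i q).index,
                  (r.left i * S ((ri i).right q)) ⊗ₜ[k]
                    ((rli i q).left s * S ((rli i q).right s))
                = ∑ q ∈ (ri i).index, counit (R := k) ((ri i).left q) •
                    ((r.left i * S ((ri i).right q)) ⊗ₜ[k] (1 : A)) := by
                  refine Finset.sum_congr rfl fun q _ => ?_
                  rw [← tmul_sum, HopfAlgebra.sum_mul_antipode_eq_algebraMap_counit (rli i q),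
                    Algebra.algebraMap_eq_smul_one, tmul_smul]
              _ = (r.left i * S (r.right i)) ⊗ₜ[k] (1 : A) := by
                  have : ∑ q ∈ (ri i).index, counit (R := k) ((ri i).left q) •
                      ((r.left i * S ((ri i).right q)) ⊗ₜ[k] (1 : A)) =
                      (r.left i * S (∑ q ∈ (ri i).index,
                        counit (R := k) ((ri i).left q) • (ri i).right q)) ⊗ₜ[k] (1 : A) := by
                    rw [map_sum, Finset.mul_sum, sum_tmul]
                    refine Finset.sum_congr rfl fun q _ => ?_
                    rw [map_smul, mul_smul_comm, smul_tmul']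
                  rw [this, _root_.sum_counit_smul]
          rw [Finset.sum_congr rfl step1, ← sum_tmul,
            HopfAlgebra.sum_mul_antipode_eq_algebraMap_counit r]
          simp only [cunit, LinearMap.comp_apply, Algebra.linearMap_apply,
            Algebra.TensorProduct.algebraMap_apply]

lemma comul_antipode_apply (a : A) :
    comul (R := k) (S a) =
      TensorProduct.map S S ((TensorProduct.comm k A A) (comul (R := k) a)) :=
  by
  have h := LinearMap.congr_fun (comul_antipode (k := k) (A := A)) a
  simp only [LinearMap.comp_apply, LinearEquiv.coe_coe] at h
  exact h

end Anticoalg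

section Gamma
variable (γ : V →ₗ[k] U)

local notation "SU" => HopfAlgebra.antipode (R := k) (A := U)

lemma comul_gamma
    (hγcomul : ((TensorProduct.comm k U U).toLinearMap ∘ₗ Coalgebra.comul) ∘ₗ γ =
      TensorProduct.map γ γ ∘ₗ Coalgebra.comul)
    {ι : Type*} (b : V) (rb : Repr k b ι) :
    comul (R := k) (γ b) = ∑ j ∈ rb.index, γ (rb.right j) ⊗ₜ[k] γ (rb.left j) := by
  have h := LinearMap.congr_fun hγcomul b
  simp only [LinearMap.comp_apply, LinearEquiv.coe_coe] at h
  have h2 := congrArg (TensorProduct.comm k U U).symm h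
  rw [LinearEquiv.symm_apply_apply] at h2
  rw [h2, ← rb.eq]
  simp only [map_sum, TensorProduct.map_tmul, TensorProduct.comm_symm_tmul]

/-- A `Repr` for `comul (γ b)` coming from a `Repr` of `b`. -/
def gammaRepr
    (hγcomul : ((TensorProduct.comm k U U).toLinearMap ∘ₗ Coalgebra.comul) ∘ₗ γ =
      TensorProduct.map γ γ ∘ₗ Coalgebra.comul)
    {ι : Type*} (b : V) (rb : Repr k b ι) : Repr k (γ b) ι where
  index := rb.index
  left := fun j => γ (rb.right j)
  right := fun j => γ (rb.left j)
  eq := (comul_gamma γ hγcomul b rb).symm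

lemma comul_Sgamma
    (hγcomul : ((TensorProduct.comm k U U).toLinearMap ∘ₗ Coalgebra.comul) ∘ₗ γ =
      TensorProduct.map γ γ ∘ₗ Coalgebra.comul)
    {ι : Type*} (b : V) (rb : Repr k b ι) :
    comul (R := k) (SU (γ b)) =
      ∑ j ∈ rb.index, SU (γ (rb.left j)) ⊗ₜ[k] SU (γ (rb.right j)) := by
  rw [comul_antipode_apply, comul_gamma γ hγcomul b rb]
  simp only [map_sum, TensorProduct.comm_tmul, TensorProduct.map_tmul]

lemma sum_gamma_antipode
    (hγcomul : ((TensorProduct.comm k U U).toLinearMap ∘ₗ Coalgebra.comul) ∘ₗ γ =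
      TensorProduct.map γ γ ∘ₗ Coalgebra.comul)
    (hγcounit : (Coalgebra.counit (R := k) (A := U)) ∘ₗ γ = Coalgebra.counit)
    {ι : Type*} (b : V) (rb : Repr k b ι) :
    ∑ j ∈ rb.index, γ (rb.right j) * SU (γ (rb.left j)) =
      counit (R := k) b • (1 : U) := by
  have h := HopfAlgebra.sum_mul_antipode_eq_algebraMap_counit (R := k) (gammaRepr γ hγcomul b rb)
  simp only [gammaRepr] at h
  rw [h, Algebra.algebraMap_eq_smul_one]
  congr 1
  exact LinearMap.congr_fun hγcounit b

lemma sum_antipode_gamma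
    (hγcomul : ((TensorProduct.comm k U U).toLinearMap ∘ₗ Coalgebra.comul) ∘ₗ γ =
      TensorProduct.map γ γ ∘ₗ Coalgebra.comul)
    (hγcounit : (Coalgebra.counit (R := k) (A := U)) ∘ₗ γ = Coalgebra.counit)
    {ι : Type*} (b : V) (rb : Repr k b ι) :
    ∑ j ∈ rb.index, SU (γ (rb.right j)) * γ (rb.left j) =
      counit (R := k) b • (1 : U) := by
  have h := HopfAlgebra.sum_antipode_mul_eq_algebraMap_counit (R := k) (gammaRepr γ hγcomul b rb)
  simp only [gammaRepr] at h
  rw [h, Algebra.algebraMap_eq_smul_one]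
  congr 1
  exact LinearMap.congr_fun hγcounit b

end Gamma

section Main
variable (γ : V →ₗ[k] U)

local notation "SU" => HopfAlgebra.antipode (R := k) (A := U)

lemma theta_repr {ι : Type*} (y : V) (r : Repr k y ι) :
    thetaMap γ y = ∑ i ∈ r.index, SU (γ (r.right i)) ⊗ₜ[k] r.left i := by
  simp only [thetaMap, LinearMap.comp_apply, LinearEquiv.coe_coe]
  rw [← r.eq]
  simp only [map_sum, TensorProduct.comm_tmul, TensorProduct.map_tmul,
    LinearMap.comp_apply, LinearMap.id_coe, id_eq]

/-- The retraction `ρ(m ⊗ x) = ε(m) x`. -/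
def rhoMap : U ⊗[k] V →ₗ[k] V :=
  (TensorProduct.lid k V).toLinearMap ∘ₗ
    LinearMap.rTensor V (Coalgebra.counit (R := k) (A := U))

lemma rhoMap_tmul (m : U) (x : V) :
    rhoMap (k := k) (m ⊗ₜ[k] x) = counit (R := k) m • x := by
  simp [rhoMap]

lemma rho_theta
    (hγcounit : (Coalgebra.counit (R := k) (A := U)) ∘ₗ γ = Coalgebra.counit)
    (y : V) : rhoMap (thetaMap γ y) = y := by
  rw [theta_repr γ y (ℛ k y), map_sum]
  calc
    ∑ i ∈ (ℛ k y).index, rhoMap (k := k) (SU (γ ((ℛ k y).right i)) ⊗ₜ[k] (ℛ k y).left i)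
      = ∑ i ∈ (ℛ k y).index, counit (R := k) ((ℛ k y).right i) • (ℛ k y).left i := by
        refine Finset.sum_congr rfl fun i _ => ?_
        rw [rhoMap_tmul, counit_antipode, ← LinearMap.congr_fun hγcounit ((ℛ k y).right i)]
        rfl
    _ = y := sum_smul_counit _

/-- `Φ(x ⊗ n) = (n ⬝ Sγ(x₂)) ⊗ x₁`. -/
def phiMap : V ⊗[k] U →ₗ[k] U ⊗[k] V :=
  LinearMap.rTensor V (LinearMap.mul' k U) ∘ₗ
    (TensorProduct.assoc k U U V).symm.toLinearMap ∘ₗ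
      LinearMap.lTensor U (LinearMap.rTensor V (SU ∘ₗ γ)) ∘ₗ
        LinearMap.lTensor U (TensorProduct.comm k V V).toLinearMap ∘ₗ
          (TensorProduct.comm k (V ⊗[k] V) U).toLinearMap ∘ₗ
            LinearMap.rTensor U (Coalgebra.comul (R := k) (A := V))

lemma phiMap_repr {ι : Type*} (x : V) (n : U) (rx : Repr k x ι) :
    phiMap γ (x ⊗ₜ[k] n) =
      ∑ p ∈ rx.index, (n * SU (γ (rx.right p))) ⊗ₜ[k] rx.left p := by
  simp only [phiMap, LinearMap.comp_apply, LinearMap.rTensor_tmul, LinearEquiv.coe_coe]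
  rw [← rx.eq]
  simp only [sum_tmul, map_sum, LinearMap.rTensor_tmul, TensorProduct.comm_tmul,
    LinearMap.lTensor_tmul, TensorProduct.assoc_symm_tmul, LinearMap.mul'_apply,
    LinearMap.comp_apply]
  refine Finset.sum_congr rfl fun p _ => ?_
  simp only [LinearEquiv.coe_coe, TensorProduct.comm_tmul, LinearMap.rTensor_tmul,
    TensorProduct.assoc_symm_tmul, LinearMap.mul'_apply, LinearMap.comp_apply]

lemma phi_one (x : V) : phiMap γ (x ⊗ₜ[k] (1 : U)) = thetaMap γ x := by
  rw [phiMap_repr γ x 1 (ℛ k x), theta_repr γ x (ℛ k x)]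
  simp only [one_mul]

/-- first slot-map for Part 1 -/
def gOne : V ⊗[k] V →ₗ[k] U ⊗[k] V :=
  TensorProduct.map (SU ∘ₗ γ) LinearMap.id ∘ₗ (TensorProduct.comm k V V).toLinearMap

lemma gOne_tmul (c d : V) : gOne γ (c ⊗ₜ[k] d) = SU (γ d) ⊗ₜ[k] c := by
  simp [gOne]

/-- second slot-map for Part 1 -/
def gTwo : V ⊗[k] V →ₗ[k] U :=
  LinearMap.mul' k U ∘ₗ TensorProduct.map (SU ∘ₗ γ) γ ∘ₗ
    (TensorProduct.comm k V V).toLinearMap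

lemma gTwo_tmul (w d : V) : gTwo γ (w ⊗ₜ[k] d) = SU (γ d) * γ w := by
  simp [gTwo]

lemma part1
    (hγcomul : ((TensorProduct.comm k U U).toLinearMap ∘ₗ Coalgebra.comul) ∘ₗ γ =
      TensorProduct.map γ γ ∘ₗ Coalgebra.comul)
    (hγcounit : (Coalgebra.counit (R := k) (A := U)) ∘ₗ γ = Coalgebra.counit)
    (y : V) :
    (piMap γ).lTensor (U ⊗[k] V) (comulCop (thetaMap γ y)) =
      thetaMap γ y ⊗ₜ[k] (1 : U) := by
  set r := ℛ k y with hr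
  set li : ∀ i : V × V, Repr k (r.left i) (V × V) := fun i => ℛ k (r.left i) with hli
  set ri : ∀ i : V × V, Repr k (r.right i) (V × V) := fun i => ℛ k (r.right i) with hri
  set rli : ∀ (i : V × V) (q : V × V), Repr k ((ri i).left q) (V × V) :=
    fun i q => ℛ k ((ri i).left q) with hrli
  have key := congrArg
    (TensorProduct.map (gOne γ) (gTwo γ) ∘ₗ regroup4 V) (four_regroup r li ri rli)
  simp only [map_sum, LinearMap.comp_apply, regroup4_tmul, TensorProduct.map_tmul,
    gOne_tmul, gTwo_tmul] at key
  calc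
    (piMap γ).lTensor (U ⊗[k] V) (comulCop (thetaMap γ y))
      = ∑ i ∈ r.index, ∑ p ∈ (li i).index, ∑ q ∈ (ri i).index,
          (SU (γ ((ri i).right q)) ⊗ₜ[k] (li i).left p) ⊗ₜ[k]
            (SU (γ ((ri i).left q)) * γ ((li i).right p)) := by
        rw [theta_repr γ y r, map_sum, map_sum]
        refine Finset.sum_congr rfl fun i _ => ?_
        simp only [comulCop, LinearMap.comp_apply, TensorProduct.map_tmul,
          LinearEquiv.coe_coe]
        rw [comul_Sgamma γ hγcomul (r.right i) (ri i), ← (li i).eq]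
        simp only [map_sum, TensorProduct.comm_tmul, sum_tmul, tmul_sum,
          TensorProduct.tensorTensorTensorComm_tmul, LinearMap.lTensor_tmul,
          piMap, LinearMap.comp_apply, LinearMap.mul'_apply]
    _ = ∑ i ∈ r.index, ∑ q ∈ (ri i).index, ∑ s ∈ (rli i q).index,
          (SU (γ ((ri i).right q)) ⊗ₜ[k] r.left i) ⊗ₜ[k]
            (SU (γ ((rli i q).right s)) * γ ((rli i q).left s)) := by
        rw [← key]
    _ = thetaMap γ y ⊗ₜ[k] (1 : U) := by
        rw [theta_repr γ y r, sum_tmul]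
        refine Finset.sum_congr rfl fun i _ => ?_
        calc
          ∑ q ∈ (ri i).index, ∑ s ∈ (rli i q).index,
              (SU (γ ((ri i).right q)) ⊗ₜ[k] r.left i) ⊗ₜ[k]
                (SU (γ ((rli i q).right s)) * γ ((rli i q).left s))
            = ∑ q ∈ (ri i).index, counit (R := k) ((ri i).left q) •
                ((SU (γ ((ri i).right q)) ⊗ₜ[k] r.left i) ⊗ₜ[k] (1 : U)) := by
              refine Finset.sum_congr rfl fun q _ => ?_
              rw [← tmul_sum, sum_antipode_gamma γ hγcomul hγcounit _ (rli i q), tmul_smul]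
          _ = (SU (γ (r.right i)) ⊗ₜ[k] r.left i) ⊗ₜ[k] (1 : U) := by
              have h1 : SU (γ (r.right i)) = ∑ q ∈ (ri i).index,
                  counit (R := k) ((ri i).left q) • SU (γ ((ri i).right q)) := by
                conv_lhs => rw [← _root_.sum_counit_smul (ri i)]
                rw [map_sum, map_sum]
                exact Finset.sum_congr rfl fun q _ => by rw [map_smul, map_smul]
              rw [h1, sum_tmul, sum_tmul]
              refine Finset.sum_congr rfl fun q _ => ?_
              rw [smul_tmul', smul_tmul']
end Main

section Part3
variable (γ : V →ₗ[k] U)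

local notation "SU" => HopfAlgebra.antipode (R := k) (A := U)

lemma part3comp
    (hγcomul : ((TensorProduct.comm k U U).toLinearMap ∘ₗ Coalgebra.comul) ∘ₗ γ =
      TensorProduct.map γ γ ∘ₗ Coalgebra.comul)
    (hγcounit : (Coalgebra.counit (R := k) (A := U)) ∘ₗ γ = Coalgebra.counit) :
    (phiMap γ ∘ₗ LinearMap.rTensor U (rhoMap (k := k))) ∘ₗ
      ((piMap γ).lTensor (U ⊗[k] V) ∘ₗ comulCop) = LinearMap.id := by
  apply TensorProduct.ext'
  intro m x
  set rm := ℛ k m with hrm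
  set rx := ℛ k x with hrx
  set rxl : ∀ j : V × V, Repr k (rx.left j) (V × V) := fun j => ℛ k (rx.left j) with hrxl
  set rxr : ∀ j : V × V, Repr k (rx.right j) (V × V) := fun j => ℛ k (rx.right j) with hrxr
  have E1 := sum_tmul_tmul_eq rx rxl rxr
  have key := congrArg
    ((TensorProduct.comm k V U).toLinearMap ∘ₗ
      (LinearMap.mulLeft k m ∘ₗ LinearMap.mul' k U ∘ₗ (TensorProduct.comm k U U).toLinearMap ∘ₗ
        TensorProduct.map (SU ∘ₗ γ) γ).lTensor V) E1
  simp only [map_sum, LinearMap.comp_apply, LinearMap.lTensor_tmul, LinearEquiv.coe_coe,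
    TensorProduct.map_tmul, TensorProduct.comm_tmul, LinearMap.mul'_apply,
    LinearMap.mulLeft_apply] at key
  simp only [LinearMap.comp_apply, LinearMap.id_apply]
  calc
    phiMap γ (LinearMap.rTensor U (rhoMap (k := k))
        ((piMap γ).lTensor (U ⊗[k] V) (comulCop (m ⊗ₜ[k] x))))
      = ∑ j ∈ rx.index, ∑ p ∈ (rxl j).index,
          (m * (γ (rx.right j) * SU (γ ((rxl j).right p)))) ⊗ₜ[k] (rxl j).left p := by
        simp only [comulCop, LinearMap.comp_apply, TensorProduct.map_tmul,
          LinearEquiv.coe_coe]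
        rw [← rm.eq, ← rx.eq]
        simp only [map_sum, TensorProduct.comm_tmul, sum_tmul, tmul_sum,
          TensorProduct.tensorTensorTensorComm_tmul, LinearMap.lTensor_tmul,
          LinearMap.rTensor_tmul, piMap, LinearMap.comp_apply, LinearMap.mul'_apply,
          rhoMap_tmul]
        refine Finset.sum_congr rfl fun j _ => ?_
        have hcol : ∀ C : U, ∑ i ∈ rm.index,
            phiMap γ ((counit (R := k) (rm.right i) • rx.left j) ⊗ₜ[k] (rm.left i * C)) =
            ∑ p ∈ (rxl j).index, (m * (C * SU (γ ((rxl j).right p)))) ⊗ₜ[k] (rxl j).left p := by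
          intro C
          have : ∀ i ∈ rm.index,
              phiMap γ ((counit (R := k) (rm.right i) • rx.left j) ⊗ₜ[k] (rm.left i * C)) =
              ∑ p ∈ (rxl j).index, counit (R := k) (rm.right i) •
                (((rm.left i * C) * SU (γ ((rxl j).right p))) ⊗ₜ[k] (rxl j).left p) := by
            intro i _
            rw [← smul_tmul', map_smul, phiMap_repr γ _ _ (rxl j), Finset.smul_sum]
          rw [Finset.sum_congr rfl this, Finset.sum_comm]
          refine Finset.sum_congr rfl fun p _ => ?_
          calc
            ∑ i ∈ rm.index, counit (R := k) (rm.right i) •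
                (((rm.left i * C) * SU (γ ((rxl j).right p))) ⊗ₜ[k] (rxl j).left p)
              = ((∑ i ∈ rm.index, counit (R := k) (rm.right i) • rm.left i) *
                  (C * SU (γ ((rxl j).right p)))) ⊗ₜ[k] (rxl j).left p := by
                rw [Finset.sum_mul, sum_tmul]
                refine Finset.sum_congr rfl fun i _ => ?_
                rw [smul_mul_assoc, smul_tmul', mul_assoc]
            _ = (m * (C * SU (γ ((rxl j).right p)))) ⊗ₜ[k] (rxl j).left p := by
                rw [sum_smul_counit]
        exact hcol (γ (rx.right j))
    _ = ∑ j ∈ rx.index, ∑ t ∈ (rxr j).index,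
          (m * (γ ((rxr j).right t) * SU (γ ((rxr j).left t)))) ⊗ₜ[k] rx.left j := key
    _ = m ⊗ₜ[k] x := by
        have hj : ∀ j ∈ rx.index, ∑ t ∈ (rxr j).index,
            (m * (γ ((rxr j).right t) * SU (γ ((rxr j).left t)))) ⊗ₜ[k] rx.left j =
            counit (R := k) (rx.right j) • (m ⊗ₜ[k] rx.left j) := by
          intro j _
          rw [← sum_tmul, ← Finset.mul_sum, sum_gamma_antipode γ hγcomul hγcounit _ (rxr j),
            mul_smul_comm, mul_one, smul_tmul']
        rw [Finset.sum_congr rfl hj]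
        calc
          ∑ j ∈ rx.index, counit (R := k) (rx.right j) • (m ⊗ₜ[k] rx.left j)
            = m ⊗ₜ[k] (∑ j ∈ rx.index, counit (R := k) (rx.right j) • rx.left j) := by
              rw [tmul_sum]
              exact Finset.sum_congr rfl fun j _ => (tmul_smul _ _ _).symm
          _ = m ⊗ₜ[k] x := by rw [sum_smul_counit]
end Part3

/-- with `π(m ⊗ x) = m γ(x)` the resulting projection of
`D = D(U^cop, V)` onto `U^cop` and `B = {a ∈ D : a₁ ⊗ π(a₂) = a ⊗ 1}`,
the map `θ(y) = S_U(γ(y₂)) ⊗ y₁` is a linear bijection of `V` onto `B`. -/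
theorem statement9 {k U V : Type*} [Field k] [Ring U] [Ring V]
    [HopfAlgebra k U] [HopfAlgebra k V]
    (SinvU : U →ₗ[k] U) (SinvV : V →ₗ[k] V)
    (hSU : ∀ u : U, HopfAlgebra.antipode (R := k) (SinvU u) = u ∧
      SinvU (HopfAlgebra.antipode (R := k) u) = u)
    (hSV : ∀ v : V, HopfAlgebra.antipode (R := k) (SinvV v) = v ∧
      SinvV (HopfAlgebra.antipode (R := k) v) = v)
    (p : U →ₗ[k] V →ₗ[k] k)
    (hp1 : ∀ (m n : U) (x : V), p (m * n) x = conv (p m) (p n) x)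
    (hp2 : ∀ (m : U) (x y : V), p m (x * y) = conv (p.flip x) (p.flip y) m)
    (hp3 : ∀ x : V, p 1 x = Coalgebra.counit x)
    (hp4 : ∀ m : U, p m 1 = Coalgebra.counit m)
    (γ : V →ₗ[k] U)
    (hγmul : ∀ x y : V, γ (x * y) = γ x * γ y)
    (hγone : γ 1 = 1)
    (hγcomul : ((TensorProduct.comm k U U).toLinearMap ∘ₗ Coalgebra.comul) ∘ₗ γ =
      TensorProduct.map γ γ ∘ₗ Coalgebra.comul)
    (hγcounit : (Coalgebra.counit (R := k) (A := U)) ∘ₗ γ = Coalgebra.counit)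
    (hγcond : ∀ (m : U) (y : V) {ι κ : Type*} (rm : Coalgebra.Repr k m ι) (ry : Coalgebra.Repr k y κ),
      ∑ i ∈ rm.index, ∑ j ∈ ry.index,
          p (rm.left i) (ry.right j) • (γ (ry.left j) * rm.right i) =
        ∑ i ∈ rm.index, ∑ j ∈ ry.index,
          p (rm.right i) (ry.left j) • (rm.left i * γ (ry.right j))) :
    (∀ y : V, (piMap γ).lTensor (U ⊗[k] V) (comulCop (thetaMap γ y)) =
        thetaMap γ y ⊗ₜ[k] (1 : U)) ∧
    Function.Injective (thetaMap γ) ∧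
    (∀ a : U ⊗[k] V,
      (piMap γ).lTensor (U ⊗[k] V) (comulCop a) = a ⊗ₜ[k] (1 : U) →
        ∃ y : V, thetaMap γ y = a) := by
  refine ⟨fun y => part1 γ hγcomul hγcounit y, ?_, ?_⟩
  · intro y₁ y₂ h
    have h2 := congrArg (rhoMap (k := k)) h
    rwa [rho_theta γ hγcounit, rho_theta γ hγcounit] at h2
  · intro a ha
    refine ⟨rhoMap a, ?_⟩
    have h3 := LinearMap.congr_fun (part3comp γ hγcomul hγcounit) a
    simp only [LinearMap.comp_apply, LinearMap.id_apply] at h3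
    rw [ha, LinearMap.rTensor_tmul, phi_one] at h3
    exact h3
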